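/- Assume e ≥ 2. For all j = 1, …, e−1: λ'_{1,j}(1) = (b₁/m₁)·λ'_{1,j}(2) + b₁·r₁·λ_{1,1}·λ'_{2,j}(1) and λ'_{2,j}(2) = (b₂/m₂)·λ'_{2,j}(1) + b₂·r₂·λ_{2,1}·λ'_{1,j}(2). -/

import Mathlib

/-- The data of a reduced irreducible quasi-ordinary prototype surface branch
`ζ = Σ_{j=1}^e x₁^{λ_{1,j}} x₂^{λ_{2,j}}` together with, for each choice `i ∈ {1,2}`
of the recursion, the derived exponent sequences `λ^{(k)}_{u,j}(i)`, the lowest-terms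
representations `λ^{(k)}_{u,1}(i) = n_u^{(k)}(i) / m_u^{(k)}(i)` of the leading
exponents, and the minimal nonnegative integers `r_i^{(k)}, s_i^{(k)}` with
`m_ĩ^{(k)}(i)·s_i^{(k)} − n_ĩ^{(k)}(i)·r_i^{(k)} = 1`.

The `Bool` index `false` corresponds to the index `1` of the paper and `true` to `2`;
for an index `i`, the other index `ĩ` is `!i`. -/
structure QOData where
  /-- the number `e ≥ 1` of characteristic terms -/
  e : ℕ
  he : 1 ≤ e
  /-- the characteristic exponents `λ_{u,j}` for `u ∈ {1,2}`, `j = 1,…,e` -/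
  lam0 : Bool → ℕ → ℚ
  /-- the derived exponents `λ^{(k)}_{u,j}(i)`; the arguments are, in order, `i u k j`,
  with `k = 0,…,e−1` and `j = 1,…,e−k` -/
  lam : Bool → Bool → ℕ → ℕ → ℚ
  /-- the numerators `n_u^{(k)}(i)`; the arguments are, in order, `i u k` -/
  n : Bool → Bool → ℕ → ℤ
  /-- the denominators `m_u^{(k)}(i) ≥ 1`; the arguments are, in order, `i u k` -/
  m : Bool → Bool → ℕ → ℕ
  /-- `r_i^{(k)}`; the arguments are, in order, `i k` -/
  r : Bool → ℕ → ℕ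
  /-- `s_i^{(k)}`; the arguments are, in order, `i k` -/
  s : Bool → ℕ → ℕ
  /-- the leading exponents are positive -/
  pos : ∀ u, 0 < lam0 u 1
  /-- the exponents are nondecreasing in `j` -/
  mono : ∀ u j, 1 ≤ j → j < e → lam0 u j ≤ lam0 u (j + 1)
  /-- each characteristic pair is essential: it does not lie in the subgroup of `ℚ²`
  generated by `ℤ²` together with the earlier pairs -/
  essential : ∀ j, 1 ≤ j → j ≤ e →
    (lam0 false j, lam0 true j) ∉
      AddSubgroup.closure
        ((Set.range fun p : ℤ × ℤ => ((p.1 : ℚ), (p.2 : ℚ))) ∪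
          {q : ℚ × ℚ | ∃ l, 1 ≤ l ∧ l < j ∧ q = (lam0 false l, lam0 true l)})
  /-- `λ^{(0)}_{u,j}(i) = λ_{u,j}` -/
  base : ∀ i u j, lam i u 0 j = lam0 u j
  /-- the denominators are at least 1 -/
  m_pos : ∀ i u k, k ≤ e - 1 → 1 ≤ m i u k
  /-- the leading exponents are written in lowest terms -/
  cop : ∀ i u k, k ≤ e - 1 → Int.gcd (n i u k) (m i u k : ℤ) = 1
  /-- `λ^{(k)}_{u,1}(i) = n_u^{(k)}(i) / m_u^{(k)}(i)` -/
  lead : ∀ i u k, k ≤ e - 1 → lam i u k 1 = (n i u k : ℚ) / (m i u k : ℚ)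
  /-- `m_ĩ^{(k)}(i)·s_i^{(k)} − n_ĩ^{(k)}(i)·r_i^{(k)} = 1` -/
  rs_det : ∀ i k, k ≤ e - 1 →
    (m i (!i) k : ℤ) * (s i k : ℤ) - n i (!i) k * (r i k : ℤ) = 1
  /-- `r_i^{(k)}` and `s_i^{(k)}` are the smallest nonnegative integers satisfying
  the determinant condition -/
  rs_min : ∀ i k, k ≤ e - 1 → ∀ r' s' : ℕ,
    (m i (!i) k : ℤ) * (s' : ℤ) - n i (!i) k * (r' : ℤ) = 1 → r i k ≤ r' ∧ s i k ≤ s'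
  /-- the recursion for `λ^{(k+1)}_{ĩ,j}(i)`, where `d_•^{(k)}(i) = lcm(m₁^{(k)}(i), m₂^{(k)}(i))` -/
  rec_other : ∀ i k j, k + 1 ≤ e - 1 → 1 ≤ j → j ≤ e - (k + 1) →
    lam i (!i) (k + 1) j =
      (m i (!i) k : ℚ) *
        (lam i (!i) k (j + 1) - lam i (!i) k 1 +
          (Nat.lcm (m i false k) (m i true k) : ℚ) * lam i (!i) k 1)
  /-- the recursion for `λ^{(k+1)}_{i,j}(i)`, where
  `b_i^{(k)} = d_•^{(k)}(i) / m_ĩ^{(k)}(i)` -/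
  rec_self : ∀ i k j, k + 1 ≤ e - 1 → 1 ≤ j → j ≤ e - (k + 1) →
    lam i i (k + 1) j =
      ((Nat.lcm (m i false k) (m i true k) / m i (!i) k : ℕ) : ℚ) *
        (lam i i k (j + 1) - lam i i k 1 +
          (Nat.lcm (m i false k) (m i true k) : ℚ) * lam i i k 1) +
      ((Nat.lcm (m i false k) (m i true k) / m i (!i) k : ℕ) : ℚ) * (r i k : ℚ) *
        lam i i k 1 * lam i (!i) (k + 1) j

namespace QOData

variable (D : QOData)

/-- `d_•^{(k)}(i) = lcm(m₁^{(k)}(i), m₂^{(k)}(i))` -/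
def dd (i : Bool) (k : ℕ) : ℕ := Nat.lcm (D.m i false k) (D.m i true k)

/-- `b_i^{(k)} = d_•^{(k)}(i) / m_ĩ^{(k)}(i)` -/
def b (i : Bool) (k : ℕ) : ℕ := D.dd i k / D.m i (!i) k

/-- `c_•^{(k)}(i) = gcd(n₁^{(k)}(i), n₂^{(k)}(i))` -/
def c (i : Bool) (k : ℕ) : ℕ := Int.gcd (D.n i false k) (D.n i true k)

/-- `d^{(k)}(i) = ∏_{l=k}^{e−1} d_•^{(l)}(i)`, the degree of the `k`-th derived surface -/
def dTot (i : Bool) (k : ℕ) : ℕ := ∏ l ∈ Finset.Ico k D.e, D.dd i l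

end QOData


private lemma den_num_unique {n n' : ℤ} {m m' : ℕ} (hm : 1 ≤ m) (hm' : 1 ≤ m')
    (hc : Int.gcd n m = 1) (hc' : Int.gcd n' m' = 1)
    (h : (n : ℚ) / (m : ℚ) = (n' : ℚ) / (m' : ℚ)) : m = m' := by
  have hm0 : (m : ℚ) ≠ 0 := Nat.cast_ne_zero.2 (by omega)
  have hm'0 : (m' : ℚ) ≠ 0 := Nat.cast_ne_zero.2 (by omega)
  have key : n * (m' : ℤ) = n' * (m : ℤ) := by
    have := (div_eq_div_iff hm0 hm'0).1 h
    exact_mod_cast this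
  have hd1 : (m : ℤ) ∣ (m' : ℤ) * n := ⟨n', by linarith [key]⟩
  have hd2 : (m' : ℤ) ∣ (m : ℤ) * n' := ⟨n, by linarith [key]⟩
  have h1 : (m : ℤ) ∣ (m' : ℤ) :=
    Int.dvd_of_dvd_mul_left_of_gcd_one hd1 (by rwa [Int.gcd_comm])
  have h2 : (m' : ℤ) ∣ (m : ℤ) :=
    Int.dvd_of_dvd_mul_left_of_gcd_one hd2 (by rwa [Int.gcd_comm])
  exact Nat.dvd_antisymm (Int.natCast_dvd_natCast.1 h1) (Int.natCast_dvd_natCast.1 h2)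

/-- For all `j = 1,…,e−1`:
`λ'_{1,j}(1) = (b₁/m₁)·λ'_{1,j}(2) + b₁·r₁·λ_{1,1}·λ'_{2,j}(1)` and
`λ'_{2,j}(2) = (b₂/m₂)·λ'_{2,j}(1) + b₂·r₂·λ_{2,1}·λ'_{1,j}(2)`. -/
theorem first_cross_relations (D : QOData) (he2 : 2 ≤ D.e)
    (j : ℕ) (hj1 : 1 ≤ j) (hj : j ≤ D.e - 1) :
    D.lam false false 1 j =
      ((D.b false 0 : ℚ) / (D.m false false 0 : ℚ)) * D.lam true false 1 j +
        (D.b false 0 : ℚ) * (D.r false 0 : ℚ) * D.lam0 false 1 * D.lam false true 1 j ∧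
    D.lam true true 1 j =
      ((D.b true 0 : ℚ) / (D.m true true 0 : ℚ)) * D.lam false true 1 j +
        (D.b true 0 : ℚ) * (D.r true 0 : ℚ) * D.lam0 true 1 * D.lam true false 1 j := by
  have hk : (0 : ℕ) ≤ D.e - 1 := Nat.zero_le _
  have hk1 : 0 + 1 ≤ D.e - 1 := by omega
  have hm : ∀ u, D.m false u 0 = D.m true u 0 := by
    intro u
    refine den_num_unique (D.m_pos false u 0 hk) (D.m_pos true u 0 hk)
      (D.cop false u 0 hk) (D.cop true u 0 hk) ?_
    rw [← D.lead false u 0 hk, ← D.lead true u 0 hk, D.base, D.base]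
  have hmne : ∀ (i u : Bool), (D.m i u 0 : ℚ) ≠ 0 := fun i u =>
    Nat.cast_ne_zero.2 (by have := D.m_pos i u 0 hk; omega)
  have r1 := D.rec_self false 0 j hk1 hj1 hj
  have r2 := D.rec_other true 0 j hk1 hj1 hj
  have r3 := D.rec_self true 0 j hk1 hj1 hj
  have r4 := D.rec_other false 0 j hk1 hj1 hj
  simp only [Bool.not_false, Bool.not_true, zero_add, D.base] at r1 r2 r3 r4
  constructor
  · rw [r1, r2]
    simp only [QOData.b, QOData.dd, Bool.not_false, hm]
    field_simp [hmne true false]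
  · rw [r3, r4]
    simp only [QOData.b, QOData.dd, Bool.not_true, hm]
    field_simp [hmne true true]
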